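/- Let 𝒜 be an abelian category and (𝒦, 𝒦^⊥) a cotorsion theory in 𝒜. Then the class Ch(𝒦) of chain complexes with all entries in 𝒦 is the left class of a cotorsion theory in Ch(𝒜): (Ch(𝒦), Ch(𝒦)^⊥) is a cotorsion theory, and moreover the disk complexes Dⁿ(Y) for Y ∈ 𝒦^⊥ lie in Ch(𝒦)^⊥. -/

import Mathlib

open CategoryTheory Limits ZeroObject

universe v' u' v u

section Perp

variable {𝒞 : Type u'} [Category.{v'} 𝒞] [Abelian 𝒞]

/-- `Y ∈ rightPerpSplit K` iff every short exact sequence `Y ↣ E ↠ Q` with `Q ∈ K`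
splits. -/
def rightPerpSplit (K : Set 𝒞) : Set 𝒞 :=
  {Y | ∀ ⦃E Q : 𝒞⦄ (i : Y ⟶ E) (p : E ⟶ Q) (w : i ≫ p = 0),
    (ShortComplex.mk i p w).ShortExact → Q ∈ K → ∃ r : E ⟶ Y, i ≫ r = 𝟙 Y}

/-- `X ∈ leftPerpSplit K` iff every short exact sequence `Y ↣ E ↠ X` with `Y ∈ K`
splits. -/
def leftPerpSplit (K : Set 𝒞) : Set 𝒞 :=
  {X | ∀ ⦃Y E : 𝒞⦄ (i : Y ⟶ E) (p : E ⟶ X) (w : i ≫ p = 0),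
    (ShortComplex.mk i p w).ShortExact → Y ∈ K → ∃ s : X ⟶ E, s ≫ p = 𝟙 X}

end Perp

variable {𝒜 : Type u} [Category.{v} 𝒜] [Abelian 𝒜]

/-- The class of complexes that are degreewise in `K`. -/
def ChCls (K : Set 𝒜) : Set (ChainComplex 𝒜 ℤ) :=
  {C | ∀ n : ℤ, C.X n ∈ K}

/-- The disk complex `Dⁿ(Y)`: `Y` in degrees `n` and `n - 1` with identity
differential, `0` elsewhere. -/
noncomputable def disk (n : ℤ) (Y : 𝒜) : ChainComplex 𝒜 ℤ where
  X i := if i = n ∨ i = n - 1 then Y else 0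
  d i j :=
    if h : i = n ∧ j = n - 1 then
      eqToHom (if_pos (Or.inl h.1)) ≫ eqToHom (if_pos (Or.inr h.2)).symm
    else 0
  shape i j hij := by
    refine dif_neg ?_
    rintro ⟨rfl, rfl⟩
    simp only [ComplexShape.down_Rel] at hij
    omega
  d_comp_d' i j k _ _ := by
    by_cases h : i = n ∧ j = n - 1
    · obtain ⟨h1, h2⟩ := h
      rw [dif_neg (show ¬(j = n ∧ k = n - 1) by rintro ⟨h3, -⟩; omega), comp_zero]
    · rw [dif_neg h, zero_comp]

section AuxAbelian

variable {𝒞 : Type u'} [Category.{v'} 𝒞] [Abelian 𝒞]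

lemma shortExact_of_isZero {A B X : 𝒞} (hA : IsZero A) (hB : IsZero B) (hX : IsZero X)
    (f : A ⟶ B) (g : B ⟶ X) (w : f ≫ g = 0) : (ShortComplex.mk f g w).ShortExact where
  exact := ShortComplex.exact_of_isZero_X₂ _ hB
  mono_f := ⟨fun a b _ => hA.eq_of_tgt a b⟩
  epi_g := ⟨fun a b _ => hX.eq_of_src a b⟩

lemma pullback_shortExact' {Y E X W : 𝒞} {i : Y ⟶ E} {p : E ⟶ X}
    {w : i ≫ p = 0} (hse : (ShortComplex.mk i p w).ShortExact) (f : W ⟶ X)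
    (j : Y ⟶ pullback f p) (hj1 : j ≫ pullback.fst f p = 0)
    (hj2 : j ≫ pullback.snd f p = i) :
    (ShortComplex.mk j (pullback.fst f p) hj1).ShortExact := by
  have hm : Mono i := hse.mono_f
  have hp : Epi p := hse.epi_g
  have hmono : Mono j := by
    have h2 : Mono (j ≫ pullback.snd f p) := by rw [hj2]; exact hm
    exact mono_of_mono j (pullback.snd f p)
  have hik : IsLimit (KernelFork.ofι i w) := hse.fIsKernel
  have hkernel : IsLimit (KernelFork.ofι j hj1) := by
    refine KernelFork.IsLimit.ofι' j hj1 (fun {A} t ht => ?_)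
    have hw : (t ≫ pullback.snd f p) ≫ p = 0 := by
      rw [Category.assoc, ← pullback.condition, ← Category.assoc, ht, zero_comp]
    obtain ⟨u, hu⟩ := KernelFork.IsLimit.lift' hik (t ≫ pullback.snd f p) hw
    refine ⟨u, ?_⟩
    apply pullback.hom_ext
    · rw [Category.assoc, hj1, comp_zero, ht]
    · rw [Category.assoc, hj2]
      exact hu
  exact { exact := ShortComplex.exact_of_f_is_kernel _ hkernel
          mono_f := hmono
          epi_g := inferInstance }

end AuxAbelian

section DiskAux

noncomputable def diskXIso (n : ℤ) (Y : 𝒜) {m : ℤ} (h : m = n ∨ m = n - 1) :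
    (disk n Y).X m ≅ Y := eqToIso (if_pos h)

lemma disk_X_isZero (n : ℤ) (Y : 𝒜) {m : ℤ} (h : ¬(m = n ∨ m = n - 1)) :
    IsZero ((disk n Y).X m) := by
  rw [show (disk n Y).X m = (0 : 𝒜) from if_neg h]
  exact isZero_zero 𝒜

lemma disk_d_eq (n : ℤ) (Y : 𝒜) :
    (disk n Y).d n (n - 1) =
      (diskXIso n Y (Or.inl rfl)).hom ≫ (diskXIso n Y (Or.inr rfl)).inv := by
  dsimp [disk, diskXIso]
  rw [dif_pos ⟨rfl, rfl⟩]

lemma disk_d_eq_zero (n : ℤ) (Y : 𝒜) {a b : ℤ} (h : ¬(a = n ∧ b = n - 1)) :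
    (disk n Y).d a b = 0 := by
  dsimp [disk]
  rw [dif_neg h]
  rfl

lemma disk_d_eq' (n : ℤ) (Y : 𝒜) {a b : ℤ} (ha : a = n) (hb : b = n - 1) :
    (disk n Y).d a b =
      (diskXIso n Y (Or.inl ha)).hom ≫ (diskXIso n Y (Or.inr hb)).inv := by
  subst ha
  subst hb
  exact disk_d_eq _ Y

noncomputable def diskMap (n : ℤ) {A B : 𝒜} (f : A ⟶ B) : disk n A ⟶ disk n B where
  f m := if h : m = n ∨ m = n - 1 then
      (diskXIso n A h).hom ≫ f ≫ (diskXIso n B h).inv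
    else 0
  comm' i j hij := by
    simp only [ComplexShape.down_Rel] at hij
    by_cases h : i = n ∧ j = n - 1
    · obtain ⟨h1, h2⟩ := h
      rw [disk_d_eq' n A h1 h2, disk_d_eq' n B h1 h2, dif_pos (Or.inl h1),
        dif_pos (Or.inr h2)]
      simp
    · rw [disk_d_eq_zero n A h, disk_d_eq_zero n B h, zero_comp, comp_zero]

lemma diskMap_f (n : ℤ) {A B : 𝒜} (f : A ⟶ B) {m : ℤ} (h : m = n ∨ m = n - 1) :
    (diskMap n f).f m = (diskXIso n A h).hom ≫ f ≫ (diskXIso n B h).inv := by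
  dsimp [diskMap]
  rw [dif_pos h]

lemma diskMap_f_zero (n : ℤ) {A B : 𝒜} (f : A ⟶ B) {m : ℤ} (h : ¬(m = n ∨ m = n - 1)) :
    (diskMap n f).f m = 0 := by
  dsimp [diskMap]
  rw [dif_neg h]

lemma diskMap_f_comp (n : ℤ) {A B C' : 𝒜} (f : A ⟶ B) (g : B ⟶ C') (m : ℤ) :
    (diskMap n f).f m ≫ (diskMap n g).f m = (diskMap n (f ≫ g)).f m := by
  by_cases h : m = n ∨ m = n - 1
  · rw [diskMap_f n f h, diskMap_f n g h, diskMap_f n (f ≫ g) h]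
    simp
  · rw [diskMap_f_zero n f h, diskMap_f_zero n (f ≫ g) h, zero_comp]

lemma diskMap_comp (n : ℤ) {A B C' : 𝒜} (f : A ⟶ B) (g : B ⟶ C') :
    diskMap n f ≫ diskMap n g = diskMap n (f ≫ g) := by
  apply HomologicalComplex.hom_ext
  intro m
  rw [HomologicalComplex.comp_f]
  exact diskMap_f_comp n f g m

lemma diskMap_zero (n : ℤ) (A B : 𝒜) : diskMap n (0 : A ⟶ B) = 0 := by
  apply HomologicalComplex.hom_ext
  intro m
  by_cases h : m = n ∨ m = n - 1
  · rw [diskMap_f n 0 h]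
    simp
  · rw [diskMap_f_zero n 0 h]
    simp

lemma diskMap_shortExact (n : ℤ) {Y E X : 𝒜} {i : Y ⟶ E} {p : E ⟶ X} {w : i ≫ p = 0}
    (hse : (ShortComplex.mk i p w).ShortExact) (m : ℤ)
    (wm : (diskMap n i).f m ≫ (diskMap n p).f m = 0) :
    (ShortComplex.mk ((diskMap n i).f m) ((diskMap n p).f m) wm).ShortExact := by
  by_cases h : m = n ∨ m = n - 1
  · refine ShortComplex.shortExact_of_iso ?_ hse
    exact ShortComplex.isoMk (diskXIso n Y h).symm (diskXIso n E h).symm (diskXIso n X h).symm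
      (by dsimp; rw [diskMap_f n i h]; simp) (by dsimp; rw [diskMap_f n p h]; simp)
  · exact shortExact_of_isZero (disk_X_isZero n Y h) (disk_X_isZero n E h)
      (disk_X_isZero n X h) _ _ _

noncomputable def toDisk (C : ChainComplex 𝒜 ℤ) (a : ℤ) {X : 𝒜} (g : C.X (a - 1) ⟶ X) :
    C ⟶ disk a X where
  f m :=
    if h1 : m = a then
      C.d m (a - 1) ≫ g ≫ (diskXIso a X (Or.inl h1)).inv
    else if h2 : m = a - 1 then
      (C.XIsoOfEq h2).hom ≫ g ≫ (diskXIso a X (Or.inr h2)).inv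
    else 0
  comm' i j hij := by
    simp only [ComplexShape.down_Rel] at hij
    by_cases h1 : i = a
    · have hj : j = a - 1 := by omega
      have hja : ¬ (j = a) := by omega
      rw [dif_pos h1, disk_d_eq' a X h1 hj, dif_neg hja, dif_pos hj]
      have hd : C.d i j ≫ (C.XIsoOfEq hj).hom = C.d i (a - 1) := by
        subst hj
        simp [HomologicalComplex.XIsoOfEq]
      simp only [Category.assoc, Iso.inv_hom_id_assoc]
      rw [← hd]
      simp
    · by_cases h2 : j = a
      · rw [disk_d_eq_zero a X (by rintro ⟨hc, -⟩; exact h1 hc), comp_zero, dif_pos h2]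
        have hd : C.d i j ≫ C.d j (a - 1) = 0 := by
          subst h2
          simp
        rw [reassoc_of% hd, zero_comp]
      · have hj2 : ¬ (j = a - 1) := by omega
        rw [disk_d_eq_zero a X (by rintro ⟨hc, -⟩; exact h1 hc), comp_zero,
          dif_neg h2, dif_neg hj2, comp_zero]

lemma toDisk_f_self (C : ChainComplex 𝒜 ℤ) (a : ℤ) {X : 𝒜} (g : C.X (a - 1) ⟶ X) :
    (toDisk C a g).f a = C.d a (a - 1) ≫ g ≫ (diskXIso a X (Or.inl rfl)).inv := by
  dsimp [toDisk]
  rw [dif_pos rfl]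

lemma toDisk_f_pred (C : ChainComplex 𝒜 ℤ) (a : ℤ) {X : 𝒜} (g : C.X (a - 1) ⟶ X)
    {m : ℤ} (h2 : m = a - 1) (h1 : ¬ (m = a)) :
    (toDisk C a g).f m =
      (C.XIsoOfEq h2).hom ≫ g ≫ (diskXIso a X (Or.inr h2)).inv := by
  dsimp [toDisk]
  rw [dif_neg h1, dif_pos h2]

end DiskAux

section PbComplex

noncomputable def pbComplex {C D B : ChainComplex 𝒜 ℤ} (α : C ⟶ D) (β : B ⟶ D) :
    ChainComplex 𝒜 ℤ where
  X m := pullback (α.f m) (β.f m)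
  d i j := pullback.lift (pullback.fst _ _ ≫ C.d i j) (pullback.snd _ _ ≫ B.d i j)
    (by rw [Category.assoc, Category.assoc, ← α.comm, ← β.comm,
          ← Category.assoc, ← Category.assoc, pullback.condition])
  shape i j hij := by
    apply pullback.hom_ext
    · erw [pullback.lift_fst]; simp [C.shape i j hij]
    · erw [pullback.lift_snd]; simp [B.shape i j hij]
  d_comp_d' i j k _ _ := by
    apply pullback.hom_ext
    · simp only [Category.assoc]; erw [pullback.lift_fst, pullback.lift_fst_assoc]; simp
    · simp only [Category.assoc]; erw [pullback.lift_snd, pullback.lift_snd_assoc]; simp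

noncomputable def pbFst {C D B : ChainComplex 𝒜 ℤ} (α : C ⟶ D) (β : B ⟶ D) :
    pbComplex α β ⟶ C where
  f m := pullback.fst _ _
  comm' i j _ := by
    dsimp [pbComplex]
    erw [pullback.lift_fst]

noncomputable def pbLift {C D B W : ChainComplex 𝒜 ℤ} {α : C ⟶ D} {β : B ⟶ D}
    (u : W ⟶ C) (v : W ⟶ B) (huv : u ≫ α = v ≫ β) : W ⟶ pbComplex α β where
  f m := pullback.lift (u.f m) (v.f m)
    (by rw [← HomologicalComplex.comp_f, huv, HomologicalComplex.comp_f])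
  comm' i j _ := by
    apply pullback.hom_ext
    · dsimp [pbComplex]
      simp only [Category.assoc]
      erw [pullback.lift_fst, pullback.lift_fst_assoc, pullback.lift_fst]; simp [u.comm i j]
    · dsimp [pbComplex]
      simp only [Category.assoc]
      erw [pullback.lift_snd, pullback.lift_snd_assoc, pullback.lift_snd]; simp [v.comm i j]

end PbComplex

section Parts

lemma disk_mem_rightPerp (K : Set 𝒜) (Y : 𝒜) (hY : Y ∈ rightPerpSplit K) (n : ℤ) :
    disk n Y ∈ rightPerpSplit (ChCls K) := by
  intro E Q ι π w hse hQ
  have hdeg := (HomologicalComplex.shortExact_iff_degreewise_shortExact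
    (ShortComplex.mk ι π w)).1 hse (n - 1)
  set e : (disk n Y).X (n - 1) ≅ Y := diskXIso n Y (Or.inr rfl) with he
  have w' : (e.inv ≫ ι.f (n - 1)) ≫ π.f (n - 1) = 0 := by
    rw [Category.assoc, ← HomologicalComplex.comp_f, w]
    simp
  have hse' : (ShortComplex.mk (e.inv ≫ ι.f (n - 1)) (π.f (n - 1)) w').ShortExact := by
    refine ShortComplex.shortExact_of_iso ?_ hdeg
    exact ShortComplex.isoMk e (Iso.refl _) (Iso.refl _) (by erw [Category.comp_id, Iso.hom_inv_id_assoc]; rfl) (by erw [Category.comp_id, Category.id_comp]; rfl)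
  obtain ⟨r', hr'⟩ := hY (e.inv ≫ ι.f (n - 1)) (π.f (n - 1)) w' hse' (hQ (n - 1))
  refine ⟨toDisk E n r', ?_⟩
  have hr'' : ι.f (n - 1) ≫ r' = e.hom := by
    rw [Category.assoc, Iso.inv_comp_eq] at hr'
    simpa using hr'
  apply HomologicalComplex.hom_ext
  intro m
  rw [HomologicalComplex.comp_f, HomologicalComplex.id_f]
  by_cases h1 : m = n
  · obtain rfl := h1
    rw [toDisk_f_self]
    have hcomm : ι.f m ≫ E.d m (m - 1) = (disk m Y).d m (m - 1) ≫ ι.f (m - 1) :=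
      ι.comm m (m - 1)
    rw [reassoc_of% hcomm, disk_d_eq]
    simp only [Category.assoc, reassoc_of% hr'']
    simp [e]
  · by_cases h2 : m = n - 1
    · obtain rfl := h2
      rw [toDisk_f_pred E n r' rfl h1]
      simp only [HomologicalComplex.XIsoOfEq, eqToIso_refl, Iso.refl_hom, Category.id_comp]
      rw [← Category.assoc, hr'']
      simp [e]
    · exact (disk_X_isZero n Y (by tauto)).eq_of_src _ _

lemma mem_ChCls_of_leftPerp (K : Set 𝒜)
    (hcot : leftPerpSplit (rightPerpSplit K) = K)
    (C : ChainComplex 𝒜 ℤ) (hC : C ∈ leftPerpSplit (rightPerpSplit (ChCls K))) :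
    C ∈ ChCls K := by
  intro n
  rw [← hcot]
  intro Y E i p w hse hY
  have hq : (n + 1) - 1 = n := by omega
  set α : C ⟶ disk (n + 1) (C.X n) := toDisk C (n + 1) (C.XIsoOfEq hq).hom with hα
  set β : disk (n + 1) E ⟶ disk (n + 1) (C.X n) := diskMap (n + 1) p with hβ
  have hcond : (0 : disk (n + 1) Y ⟶ C) ≫ α = diskMap (n + 1) i ≫ β := by
    rw [zero_comp, hβ, diskMap_comp, w, diskMap_zero]
  set ι' : disk (n + 1) Y ⟶ pbComplex α β := pbLift 0 (diskMap (n + 1) i) hcond with hι'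
  have wS : ι' ≫ pbFst α β = 0 := by
    apply HomologicalComplex.hom_ext
    intro m
    rw [HomologicalComplex.comp_f, hι']
    dsimp [pbLift, pbFst]
    erw [pullback.lift_fst]
  have hseS : (ShortComplex.mk ι' (pbFst α β) wS).ShortExact := by
    rw [HomologicalComplex.shortExact_iff_degreewise_shortExact]
    intro m
    have wm : (diskMap (n + 1) i).f m ≫ (diskMap (n + 1) p).f m = 0 := by
      rw [diskMap_f_comp, w, diskMap_zero]
      simp
    exact pullback_shortExact' (diskMap_shortExact (n + 1) hse m wm) (α.f m) (ι'.f m)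
      (by rw [hι']; dsimp [pbLift]; erw [pullback.lift_fst]) (by rw [hι']; dsimp [pbLift]; erw [pullback.lift_snd])
  obtain ⟨s, hs⟩ := hC ι' (pbFst α β) wS hseS (disk_mem_rightPerp K Y hY (n + 1))
  have hn : n = n + 1 ∨ n = (n + 1) - 1 := Or.inr (by omega)
  set eE : (disk (n + 1) E).X n ≅ E := diskXIso (n + 1) E hn with heE
  set eX : (disk (n + 1) (C.X n)).X n ≅ C.X n := diskXIso (n + 1) (C.X n) hn with heX
  refine ⟨s.f n ≫ pullback.snd (α.f n) (β.f n) ≫ eE.hom, ?_⟩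
  have hfst : s.f n ≫ pullback.fst (α.f n) (β.f n) = 𝟙 (C.X n) := by
    have := congrArg (fun (φ : C ⟶ C) => φ.f n) hs
    simpa [pbFst] using this
  have hβn : eE.hom ≫ p = β.f n ≫ eX.hom := by
    rw [hβ, diskMap_f (n + 1) p hn]
    simp [heE, heX]
  have hαn : α.f n ≫ eX.hom = 𝟙 (C.X n) := by
    rw [hα, toDisk_f_pred C (n + 1) (C.XIsoOfEq hq).hom (by omega) (by omega)]
    simp [heX, diskXIso, HomologicalComplex.XIsoOfEq]
  calc (s.f n ≫ pullback.snd (α.f n) (β.f n) ≫ eE.hom) ≫ p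
      = s.f n ≫ pullback.snd (α.f n) (β.f n) ≫ β.f n ≫ eX.hom := by
        erw [Category.assoc, Category.assoc, hβn]
    _ = s.f n ≫ pullback.fst (α.f n) (β.f n) ≫ α.f n ≫ eX.hom := by
        erw [← pullback.condition_assoc]; rfl
    _ = 𝟙 (C.X n) := by
        erw [hαn, Category.comp_id, hfst]

end Parts

/-- If `(𝒦, 𝒦^⊥)` is a cotorsion theory in `𝒜`, then `(Ch(𝒦), Ch(𝒦)^⊥)` is a
cotorsion theory in `Ch(𝒜)`, and the disk complexes `Dⁿ(Y)` for `Y ∈ 𝒦^⊥` belong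
to `Ch(𝒦)^⊥`. -/
theorem statement17 (K : Set 𝒜)
    (hcot : leftPerpSplit (rightPerpSplit K) = K) :
    leftPerpSplit (rightPerpSplit (ChCls K)) = ChCls K ∧
      ∀ Y ∈ rightPerpSplit K, ∀ n : ℤ, disk n Y ∈ rightPerpSplit (ChCls K) := by
  constructor
  · apply Set.Subset.antisymm
    · intro C hC
      exact mem_ChCls_of_leftPerp K hcot C hC
    · intro C hC Y E ι π w hse hYmem
      obtain ⟨r, hr⟩ := hYmem ι π w hse hC
      have spl := ShortComplex.Splitting.ofExactOfRetraction _ hse.exact r hr hse.epi_g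
      exact ⟨spl.s, spl.s_g⟩
  · intro Y hY n
    exact disk_mem_rightPerp K Y hY n
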